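/- Let A be an associative unital algebra over k = ℚ(q) containing elements E, F and invertible elements K₊, K₋ satisfying the U_q(s̃l₂) relations, and let C⁽ʳ⁾ be the Chebyshev-type central elements defined from C = FE − qK₊ − q⁻¹K₋. Suppose T : A → A is a k-algebra homomorphism with T(E) = q⁻¹K₊⁻¹F, T(F) = q⁻¹K₋⁻¹E, T(K₊) = K₊⁻¹ and T(K₋) = K₋⁻¹. Then T(C) = (K₊K₋)⁻¹·C, and more generally T(C⁽ʳ⁾) = (K₊K₋)^{−r}·C⁽ʳ⁾ for every integer r ≥ 0. -/

import Mathlib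

noncomputable section

/-- The Chebyshev-type elements `C⁽⁰⁾ = 1`, `C⁽¹⁾ = C`,
`C⁽ᵐ⁺¹⁾ = C·C⁽ᵐ⁾ - K₊K₋·C⁽ᵐ⁻¹⁾` (for `m ≥ 1`), where `KK = K₊K₋`. -/
def cheb {A : Type*} [Ring A] (C KK : A) : ℕ → A
  | 0 => 1
  | 1 => C
  | n + 2 => C * cheb C KK (n + 1) - KK * cheb C KK n

/-- if `T` is a `ℚ(q)`-algebra endomorphism of `A` with
`T(E) = q⁻¹K₊⁻¹F`, `T(F) = q⁻¹K₋⁻¹E`, `T(K₊) = K₊⁻¹`, `T(K₋) = K₋⁻¹`, then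
`T(C) = (K₊K₋)⁻¹ C` and more generally `T(C⁽ʳ⁾) = (K₊K₋)^{-r} C⁽ʳ⁾` for all `r ≥ 0`. -/
theorem statement13 {A : Type*} [Ring A] [Algebra (RatFunc ℚ) A]
    (q : RatFunc ℚ) (hq : q = RatFunc.X)
    (E F Kp Km Kpi Kmi : A)
    (hKpKpi : Kp * Kpi = 1) (hKpiKp : Kpi * Kp = 1)
    (hKmKmi : Km * Kmi = 1) (hKmiKm : Kmi * Km = 1)
    (hK : Kp * Km = Km * Kp)
    (hKpE : Kp * E = (q ^ 2) • (E * Kp))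
    (hKmE : Km * E = (q⁻¹ ^ 2) • (E * Km))
    (hKpF : Kp * F = (q⁻¹ ^ 2) • (F * Kp))
    (hKmF : Km * F = (q ^ 2) • (F * Km))
    (hEF : E * F - F * E = (q⁻¹ - q) • (Kp - Km))
    (T : A →ₐ[RatFunc ℚ] A)
    (hTE : T E = q⁻¹ • (Kpi * F)) (hTF : T F = q⁻¹ • (Kmi * E))
    (hTKp : T Kp = Kpi) (hTKm : T Km = Kmi)
    (C : A) (hC : C = F * E - q • Kp - q⁻¹ • Km) :
    T C = (Kmi * Kpi) * C ∧
      ∀ r : ℕ, T (cheb C (Kp * Km) r) = (Kmi * Kpi) ^ r * cheb C (Kp * Km) r := by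
  have hq0 : q ≠ 0 := by rw [hq]; exact RatFunc.X_ne_zero
  have hqi : q⁻¹ * q = 1 := inv_mul_cancel₀ hq0
  have hqi' : q * q⁻¹ = 1 := mul_inv_cancel₀ hq0
  have hq2 : q ^ 2 * q⁻¹ ^ 2 = 1 := by field_simp
  have hq2' : q⁻¹ ^ 2 * q ^ 2 = 1 := by field_simp
  -- E and F commute with Kp*Km
  have hKKE : (Kp * Km) * E = E * (Kp * Km) := by
    rw [mul_assoc, hKmE, mul_smul_comm, ← mul_assoc, hKpE, smul_mul_assoc, smul_smul,
      hq2', one_smul, mul_assoc]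
  have hKKF : (Kp * Km) * F = F * (Kp * Km) := by
    rw [mul_assoc, hKmF, mul_smul_comm, ← mul_assoc, hKpF, smul_mul_assoc, smul_smul,
      hq2, one_smul, mul_assoc]
  -- swapping with inverses
  have hEKpi : E * Kpi = (q ^ 2) • (Kpi * E) := by
    have : Kpi * (Kp * E) * Kpi = Kpi * ((q ^ 2) • (E * Kp)) * Kpi := by rw [hKpE]
    calc E * Kpi = Kpi * Kp * E * Kpi := by rw [hKpiKp, one_mul]
      _ = Kpi * (Kp * E) * Kpi := by rw [mul_assoc Kpi]
      _ = Kpi * ((q ^ 2) • (E * Kp)) * Kpi := by rw [hKpE]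
      _ = (q ^ 2) • (Kpi * E * (Kp * Kpi)) := by
          rw [mul_smul_comm, smul_mul_assoc]
          congr 1
          rw [mul_assoc, mul_assoc, mul_assoc]
      _ = (q ^ 2) • (Kpi * E) := by rw [hKpKpi, mul_one]
  -- Kpi commutes with Km, Kmi commutes with Kp
  have hKpiKm : Kpi * Km = Km * Kpi := by
    calc Kpi * Km = Kpi * Km * (Kp * Kpi) := by rw [hKpKpi, mul_one]
      _ = Kpi * (Km * Kp) * Kpi := by rw [mul_assoc, mul_assoc, mul_assoc]
      _ = Kpi * (Kp * Km) * Kpi := by rw [hK]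
      _ = (Kpi * Kp) * (Km * Kpi) := by rw [mul_assoc, mul_assoc, mul_assoc]
      _ = Km * Kpi := by rw [hKpiKp, one_mul]
  -- key inverse identities
  have hKKi : (Kp * Km) * (Kmi * Kpi) = 1 := by
    rw [mul_assoc, ← mul_assoc Km, hKmKmi, one_mul, hKpKpi]
  have hKiK : (Kmi * Kpi) * (Kp * Km) = 1 := by
    rw [mul_assoc, ← mul_assoc Kpi, hKpiKp, one_mul, hKmiKm]
  -- Kmi*Kpi*Kp = Kmi, Kmi*Kpi*Km = Kpi
  have hA : Kmi * Kpi * Kp = Kmi := by rw [mul_assoc, hKpiKp, mul_one]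
  have hB : Kmi * Kpi * Km = Kpi := by
    rw [mul_assoc, hKpiKm, ← mul_assoc, hKmiKm, one_mul]
  -- main computation for T C
  have hTC : T C = (Kmi * Kpi) * C := by
    have hEFeq : E * F = F * E + (q⁻¹ - q) • (Kp - Km) := by
      rw [← hEF]; abel
    rw [hC, map_sub, map_sub, map_mul, map_smul, map_smul, hTE, hTF, hTKp, hTKm]
    have lhs1 : (q⁻¹ • (Kmi * E)) * (q⁻¹ • (Kpi * F)) = Kmi * Kpi * (E * F) := by
      rw [smul_mul_assoc, mul_smul_comm, smul_smul]
      have : Kmi * E * (Kpi * F) = (q ^ 2) • (Kmi * Kpi * (E * F)) := by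
        rw [mul_assoc Kmi E, ← mul_assoc E, hEKpi, smul_mul_assoc, mul_smul_comm]
        simp only [mul_assoc]
      rw [this, smul_smul]
      have : q⁻¹ * q⁻¹ * q ^ 2 = 1 := by field_simp
      rw [this, one_smul]
    rw [lhs1, hEFeq]
    simp only [mul_add, mul_sub, smul_sub, sub_smul, mul_smul_comm, hA, hB]
    abel
  refine ⟨hTC, ?_⟩
  -- C commutes with Kp*Km, hence with Kmi*Kpi
  have hCKK : C * (Kp * Km) = (Kp * Km) * C := by
    rw [hC, sub_mul, sub_mul, mul_sub, mul_sub, smul_mul_assoc, smul_mul_assoc,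
      mul_smul_comm, mul_smul_comm]
    have h1 : F * E * (Kp * Km) = Kp * Km * (F * E) := by
      rw [mul_assoc, ← hKKE, ← mul_assoc, ← hKKF, mul_assoc]
    have h2 : Kp * (Kp * Km) = Kp * Km * Kp := by
      rw [mul_assoc, hK, ← mul_assoc]
    have h3 : Km * (Kp * Km) = Kp * Km * Km := by
      rw [← mul_assoc, ← hK, mul_assoc]
    rw [h1, h2, h3]
  have hCKKi : Commute C (Kmi * Kpi) := by
    show C * (Kmi * Kpi) = (Kmi * Kpi) * C
    calc C * (Kmi * Kpi) = (Kmi * Kpi) * (Kp * Km) * C * (Kmi * Kpi) := by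
          rw [hKiK, one_mul]
      _ = (Kmi * Kpi) * ((Kp * Km) * C) * (Kmi * Kpi) := by rw [mul_assoc (Kmi * Kpi)]
      _ = (Kmi * Kpi) * (C * (Kp * Km)) * (Kmi * Kpi) := by rw [hCKK]
      _ = (Kmi * Kpi) * C * ((Kp * Km) * (Kmi * Kpi)) := by
          simp only [mul_assoc]
      _ = (Kmi * Kpi) * C := by rw [hKKi, mul_one]
  intro r
  induction r using Nat.twoStepInduction with
  | zero => simp [cheb]
  | one => simpa [cheb] using hTC
  | more n ih1 ih2 =>
    show T (C * cheb C (Kp * Km) (n + 1) - (Kp * Km) * cheb C (Kp * Km) n)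
        = (Kmi * Kpi) ^ (n + 2) * (C * cheb C (Kp * Km) (n + 1) - (Kp * Km) * cheb C (Kp * Km) n)
    rw [map_sub, map_mul, map_mul, hTC, ih1, ih2, map_mul, hTKp, hTKm]
    have hKiK' : Kpi * Kmi = Kmi * Kpi := by
      calc Kpi * Kmi = Kpi * Kmi * (Km * Kmi) * (Kp * Kpi) := by
            rw [hKmKmi, hKpKpi, mul_one, mul_one]
        _ = Kpi * (Kmi * Km) * (Kmi * Kp) * Kpi := by
            simp only [mul_assoc]
        _ = Kpi * (Kmi * Kp) * Kpi := by rw [hKmiKm, mul_one]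
        _ = Kmi * Kpi := by
            have : Kmi * Kp = Kp * Kmi := by
              calc Kmi * Kp = Kmi * Kp * (Km * Kmi) := by rw [hKmKmi, mul_one]
                _ = Kmi * (Kp * Km) * Kmi := by simp only [mul_assoc]
                _ = Kmi * (Km * Kp) * Kmi := by rw [hK]
                _ = (Kmi * Km) * (Kp * Kmi) := by simp only [mul_assoc]
                _ = Kp * Kmi := by rw [hKmiKm, one_mul]
            rw [this, ← mul_assoc, hKpiKp, one_mul]
    rw [hKiK']
    rw [mul_sub]
    congr 1
    · -- (Kmi*Kpi)*C * ((Kmi*Kpi)^(n+1) * cheb (n+1)) = (Kmi*Kpi)^(n+2) * (C * cheb (n+1))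
      rw [← mul_assoc, mul_assoc (Kmi * Kpi) C, (hCKKi.pow_right (n + 1)).eq]
      rw [pow_succ' (Kmi * Kpi) (n + 1)]
      simp only [mul_assoc]
    · -- (Kmi*Kpi) * ((Kmi*Kpi)^n * cheb n) = (Kmi*Kpi)^(n+2) * ((Kp*Km) * cheb n)
      have : (Kmi * Kpi) ^ (n + 2) * ((Kp * Km) * cheb C (Kp * Km) n)
          = (Kmi * Kpi) ^ (n + 1) * cheb C (Kp * Km) n := by
        rw [pow_succ (Kmi * Kpi) (n + 1), mul_assoc, ← mul_assoc (Kmi * Kpi) (Kp * Km),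
          hKiK, one_mul]
      rw [this, pow_succ' (Kmi * Kpi) n]
      simp only [mul_assoc]
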